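/- For every R ∈ RatFunc ℂ there is a finite set E ⊆ ℂ such that for every z ∈ ℂ \ E, the evaluations satisfy 2z · (𝔉(R))(z²) = R(z) − R(−z). (This identifies the coefficientwise definition of 𝔉 with the formula 𝔉(R)(x) = (R(√x) − R(−√x))/(2√x).) -/

import Mathlib

/-- The `n`-th coefficient of the Laurent expansion at `0` of a rational function. -/
noncomputable def coeffL (R : RatFunc ℂ) (n : ℤ) : ℂ :=
  ((R : LaurentSeries ℂ)).coeff n

open Polynomial HahnSeries
open scoped RatFunc
set_option maxRecDepth 8000



noncomputable def tau (x : LaurentSeries ℂ) : LaurentSeries ℂ where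
  coeff n := (-1) ^ n * x.coeff n
  isPWO_support' := x.isPWO_support.mono (by
    intro n hn
    simp only [Function.mem_support, ne_eq] at hn ⊢
    intro h; exact hn (by rw [h, mul_zero]))

@[simp] lemma tau_coeff (x : LaurentSeries ℂ) (n : ℤ) : (tau x).coeff n = (-1) ^ n * x.coeff n := rfl

lemma tau_support (x : LaurentSeries ℂ) : (tau x).support = x.support := by
  ext n
  simp only [HahnSeries.mem_support, tau_coeff, ne_eq, mul_eq_zero, not_or]
  constructor
  · tauto
  · intro h; exact ⟨fun hc => by simpa using (zpow_ne_zero n (by norm_num : (-1:ℂ) ≠ 0)) hc, h⟩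

lemma tau_mul (x y : LaurentSeries ℂ) : tau (x * y) = tau x * tau y := by
  ext n
  have hA : Finset.antidiagonal (tau x).isPWO_support (tau y).isPWO_support n
      = Finset.antidiagonal x.isPWO_support y.isPWO_support n := by
    ext ij
    simp [Finset.mem_addAntidiagonal, tau_support]
  rw [tau_coeff, HahnSeries.coeff_mul, HahnSeries.coeff_mul, hA, Finset.mul_sum]
  refine Finset.sum_congr rfl ?_
  rintro ⟨i, j⟩ hij
  rw [Finset.mem_addAntidiagonal] at hij
  rw [tau_coeff, tau_coeff, ← hij.2.2]
  rw [zpow_add₀ (by norm_num : (-1:ℂ) ≠ 0)]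
  ring

noncomputable def sigma : LaurentSeries ℂ →+* LaurentSeries ℂ :=
  HahnSeries.embDomainRingHom (AddMonoidHom.mk' (fun n : ℤ => 2 * n) (by intros; ring))
    (fun a b h => by simpa using h) (fun a b => by simp)

lemma sigma_coeff_even (x : LaurentSeries ℂ) (k : ℤ) : (sigma x).coeff (2 * k) = x.coeff k :=
  HahnSeries.embDomain_coeff

lemma sigma_coeff_odd (x : LaurentSeries ℂ) (n : ℤ) (h : ¬ (2 ∣ n)) : (sigma x).coeff n = 0 := by
  apply HahnSeries.embDomain_notin_range
  rintro ⟨k, rfl⟩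
  exact h ⟨k, rfl⟩

lemma coeff_comp_neg_X (p : ℂ[X]) (n : ℕ) : (p.comp (-X)).coeff n = (-1) ^ n * p.coeff n := by
  induction p using Polynomial.induction_on' with
  | add f g hf hg => simp only [add_comp, Polynomial.coeff_add, hf, hg]; ring
  | monomial k a =>
    rw [monomial_comp]
    rw [show (-X : ℂ[X]) ^ k = (-1) ^ k * X ^ k by rw [neg_pow]]
    rw [show ((-1 : ℂ[X]) ^ k) = Polynomial.C ((-1) ^ k) by simp]
    simp only [coeff_mul_C, coeff_C_mul, coeff_X_pow, coeff_monomial, mul_ite, ite_mul,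
      mul_zero, zero_mul, mul_one, one_mul]
    by_cases h : k = n
    · subst h; simp [mul_comm]
    · simp [h, Ne.symm h]

lemma coeff_comp_X_sq (p : ℂ[X]) (n : ℕ) :
    (p.comp (X ^ 2)).coeff n = if 2 ∣ n then p.coeff (n / 2) else 0 := by
  induction p using Polynomial.induction_on' with
  | add f g hf hg => by_cases h : 2 ∣ n <;> simp [add_comp, hf, hg, h]
  | monomial k a =>
    rw [monomial_comp, ← pow_mul]
    simp only [coeff_C_mul, coeff_X_pow, coeff_monomial, mul_ite, mul_zero, mul_one]
    by_cases h : n = 2 * k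
    · subst h
      simp [Nat.mul_div_cancel_left]
    · rw [if_neg (by omega)]
      by_cases h2 : 2 ∣ n
      · obtain ⟨m, rfl⟩ := h2
        rw [if_pos ⟨m, rfl⟩, Nat.mul_div_cancel_left _ (by norm_num), if_neg (by omega)]
      · simp [h2]

noncomputable def Phi : ℂ[X] →+* LaurentSeries ℂ :=
  (algebraMap (RatFunc ℂ) (LaurentSeries ℂ)).comp (algebraMap ℂ[X] (RatFunc ℂ))

lemma Phi_apply (p : ℂ[X]) : Phi p = ((algebraMap ℂ[X] (RatFunc ℂ) p : RatFunc ℂ) : LaurentSeries ℂ) :=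
  rfl

lemma Phi_coeff (p : ℂ[X]) (i : ℤ) :
    (Phi p).coeff i = if i < 0 then 0 else p.coeff i.natAbs := by
  rw [Phi_apply]
  rw [show ((algebraMap ℂ[X] (RatFunc ℂ) p : RatFunc ℂ) : LaurentSeries ℂ)
      = ((p : RatFunc ℂ) : LaurentSeries ℂ) from rfl]
  rw [← RatFunc.coe_coe, PowerSeries.coeff_coe]
  simp [Polynomial.coeff_coe]

lemma Phi_injective : Function.Injective Phi := by
  intro a b h
  exact IsFractionRing.injective ℂ[X] (RatFunc ℂ)
    ((algebraMap (RatFunc ℂ) (LaurentSeries ℂ)).injective (by simpa [Phi_apply] using h))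

lemma Phi_comp_neg (m : ℂ[X]) : Phi (m.comp (-X)) = tau (Phi m) := by
  ext i
  rw [tau_coeff, Phi_coeff, Phi_coeff]
  by_cases h : i < 0
  · simp [h]
  · rw [if_neg h, if_neg h, coeff_comp_neg_X]
    congr 1
    rw [show i = (i.natAbs : ℤ) by omega, zpow_natCast, Int.natAbs_natCast]

lemma Phi_comp_sq (m : ℂ[X]) : Phi (m.comp (X ^ 2)) = sigma (Phi m) := by
  ext i
  by_cases h : 2 ∣ i
  · obtain ⟨k, rfl⟩ := h
    rw [sigma_coeff_even, Phi_coeff, Phi_coeff]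
    by_cases hk : k < 0
    · rw [if_pos (by omega), if_pos hk]
    · rw [if_neg (by omega), if_neg hk, coeff_comp_X_sq,
        if_pos (by omega), show (2*k).natAbs / 2 = k.natAbs by omega]
  · rw [sigma_coeff_odd _ _ h, Phi_coeff]
    by_cases hi : i < 0
    · rw [if_pos hi]
    · rw [if_neg hi, coeff_comp_X_sq, if_neg (by omega)]

lemma key_series (f g : LaurentSeries ℂ) (hg : ∀ k : ℤ, g.coeff k = f.coeff (2 * k + 1)) :
    (HahnSeries.single (1:ℤ) (2:ℂ)) * sigma g = f - tau f := by
  ext n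
  have h1 : ((HahnSeries.single (1:ℤ) (2:ℂ)) * sigma g).coeff n = 2 * (sigma g).coeff (n - 1) := by
    rw [show n = (n - 1) + 1 by ring]
    rw [HahnSeries.coeff_single_mul_add]
    ring_nf
  rw [h1, HahnSeries.coeff_sub, tau_coeff]
  by_cases h : 2 ∣ n - 1
  · obtain ⟨k, hk⟩ := h
    rw [hk, sigma_coeff_even, hg k, show 2 * k + 1 = n by omega]
    rw [Odd.neg_one_zpow ⟨k, by omega⟩]
    ring
  · rw [sigma_coeff_odd _ _ h, Even.neg_one_zpow ⟨n / 2, by omega⟩]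
    ring


/-- For every rational function `R` there is a finite set `E ⊆ ℂ` outside of which
`2z ⬝ 𝔉(R)(z²) = R(z) − R(−z)`: the coefficientwise definition of `𝔉` agrees with the
formula `𝔉(R)(x) = (R(√x) − R(−√x))/(2√x)`. -/
theorem stmt_19 (F : RatFunc ℂ → RatFunc ℂ)
    (hF : ∀ R : RatFunc ℂ, ∀ k : ℤ, coeffL (F R) k = coeffL R (2 * k + 1))
    (R : RatFunc ℂ) :
    ∃ E : Finset ℂ, ∀ z : ℂ, z ∉ E →
      2 * z * RatFunc.eval (RingHom.id ℂ) (z ^ 2) (F R) =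
        RatFunc.eval (RingHom.id ℂ) z R - RatFunc.eval (RingHom.id ℂ) (-z) R := by
  set N := R.num with hN
  set D := R.denom with hD
  set p := (F R).num with hp
  set q := (F R).denom with hq
  set f : LaurentSeries ℂ := (R : LaurentSeries ℂ) with hf
  set g : LaurentSeries ℂ := ((F R : RatFunc ℂ) : LaurentSeries ℂ) with hgdef
  have hDne : D ≠ 0 := R.denom_ne_zero
  have hqne : q ≠ 0 := (F R).denom_ne_zero
  -- series-level facts
  have hPhiD : Phi D ≠ 0 := fun h => hDne (Phi_injective (by simpa using h))
  have hPhiq : Phi q ≠ 0 := fun h => hqne (Phi_injective (by simpa using h))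
  have hNf : Phi N = f * Phi D := by
    have hD0 : algebraMap ℂ[X] (RatFunc ℂ) D ≠ 0 :=
      fun h => hDne (IsFractionRing.injective ℂ[X] (RatFunc ℂ) (by simpa using h))
    have : algebraMap ℂ[X] (RatFunc ℂ) N = R * algebraMap ℂ[X] (RatFunc ℂ) D := by
      rw [← RatFunc.num_div_denom R, div_mul_cancel₀]
      exact hD0
    calc Phi N = ((R * algebraMap ℂ[X] (RatFunc ℂ) D : RatFunc ℂ) : LaurentSeries ℂ) := by
          rw [Phi_apply, this]
      _ = f * Phi D := by rw [map_mul]; rfl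
  have hpg : Phi p = g * Phi q := by
    have hq0 : algebraMap ℂ[X] (RatFunc ℂ) q ≠ 0 :=
      fun h => hqne (IsFractionRing.injective ℂ[X] (RatFunc ℂ) (by simpa using h))
    have : algebraMap ℂ[X] (RatFunc ℂ) p = F R * algebraMap ℂ[X] (RatFunc ℂ) q := by
      rw [← RatFunc.num_div_denom (F R), div_mul_cancel₀]
      exact hq0
    calc Phi p = ((F R * algebraMap ℂ[X] (RatFunc ℂ) q : RatFunc ℂ) : LaurentSeries ℂ) := by
          rw [Phi_apply, this]
      _ = g * Phi q := by rw [map_mul]; rfl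
  have hkey : (HahnSeries.single (1:ℤ) (2:ℂ)) * sigma g = f - tau f :=
    key_series f g (fun k => hF R k)
  have hPhi2X : Phi (Polynomial.C 2 * X) = HahnSeries.single (1:ℤ) (2:ℂ) := by
    rw [map_mul]
    rw [show Phi (Polynomial.C 2) = HahnSeries.C (2:ℂ) by
      simp only [Phi_apply, map_ofNat]]
    rw [show Phi X = HahnSeries.single (1:ℤ) (1:ℂ) by
      rw [Phi_apply, RatFunc.algebraMap_X, RatFunc.coe_X]]
    rw [HahnSeries.C_apply, HahnSeries.single_mul_single]
    norm_num
  -- the polynomial identity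
  have keypoly : Polynomial.C 2 * X * (p.comp (X ^ 2)) * (D * D.comp (-X))
      = (N * D.comp (-X) - N.comp (-X) * D) * q.comp (X ^ 2) := by
    apply Phi_injective
    simp only [map_mul, map_sub, Phi_comp_neg, Phi_comp_sq, hNf, hpg, hPhi2X,
      map_mul, tau_mul]
    linear_combination (Phi D * tau (Phi D) * sigma (Phi q)) * hkey
  -- the finite exceptional set
  refine ⟨(D * D.comp (-X) * q.comp (X ^ 2)).roots.toFinset, fun z hz => ?_⟩
  have hprod : D * D.comp (-X) * q.comp (X ^ 2) ≠ 0 := by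
    have h1 : D.comp (-X) ≠ 0 := by simp [Polynomial.comp_eq_zero_iff, hDne]
    have h2 : q.comp (X ^ 2) ≠ 0 := by simp [Polynomial.comp_eq_zero_iff, hqne]
    exact mul_ne_zero (mul_ne_zero hDne h1) h2
  have hev : (D * D.comp (-X) * q.comp (X ^ 2)).eval z ≠ 0 := by
    intro h
    exact hz (Multiset.mem_toFinset.2 ((Polynomial.mem_roots hprod).2 h))
  simp only [Polynomial.eval_mul, Polynomial.eval_comp, Polynomial.eval_neg, Polynomial.eval_X,
    Polynomial.eval_pow, mul_ne_zero_iff] at hev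
  obtain ⟨⟨hDz, hDnz⟩, hqz⟩ := hev
  have hevalgoal := congrArg (Polynomial.eval z) keypoly
  simp only [Polynomial.eval_mul, Polynomial.eval_sub, Polynomial.eval_comp, Polynomial.eval_neg,
    Polynomial.eval_X, Polynomial.eval_pow, Polynomial.eval_C] at hevalgoal
  rw [show RatFunc.eval (RingHom.id ℂ) (z ^ 2) (F R) = p.eval (z ^ 2) / q.eval (z ^ 2) from rfl,
    show RatFunc.eval (RingHom.id ℂ) z R = N.eval z / D.eval z from rfl,
    show RatFunc.eval (RingHom.id ℂ) (-z) R = N.eval (-z) / D.eval (-z) from rfl]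
  field_simp
  linear_combination hevalgoal
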